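/- Let n be an integer with n ≥ 3, let I ⊂ ℝ be a nondegenerate interval, and let g : I → I be a continuous function satisfying g^n(x) = n·g(x) − (n−1)·x for every x ∈ I. Then: if g is increasing, it satisfies g²(x) − 2·g(x) + x = 0 for every x ∈ I; and if g is decreasing, then n is odd and g satisfies g²(x) − (r₀ + 1)·g(x) + r₀·x = 0 for every x ∈ I, where r₀ denotes the unique negative real root of the polynomial r^n − n·r + n − 1. -/

import Mathlib

open Function Set Filter Topology

private lemma geom_aux (n : ℕ) (hn : 3 ≤ n) (y : ℝ) (hy : 0 ≤ y)
    (h : y ^ n - (n : ℝ) * y + ((n : ℝ) - 1) ≤ 0) : y = 1 := by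
  have hQ1 : (1 : ℝ) ≤ ∑ j ∈ Finset.range n, ∑ i ∈ Finset.range j, y ^ i := by
    have h2 : ∑ i ∈ Finset.range 1, y ^ i ≤ ∑ j ∈ Finset.range n, ∑ i ∈ Finset.range j, y ^ i := by
      apply Finset.single_le_sum (f := fun j => ∑ i ∈ Finset.range j, y ^ i)
      · intro j _
        apply Finset.sum_nonneg
        intro i _
        positivity
      · exact Finset.mem_range.mpr (by omega)
    simpa using h2
  have hkey : y ^ n - (n : ℝ) * y + ((n : ℝ) - 1)
      = (y - 1) ^ 2 * ∑ j ∈ Finset.range n, ∑ i ∈ Finset.range j, y ^ i := by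
    have e2 : (y - 1) * ∑ j ∈ Finset.range n, ∑ i ∈ Finset.range j, y ^ i
        = ∑ j ∈ Finset.range n, (y ^ j - 1) := by
      rw [Finset.mul_sum]
      refine Finset.sum_congr rfl fun j _ => ?_
      rw [mul_comm]
      exact geom_sum_mul y j
    have e3 : ∑ j ∈ Finset.range n, (y ^ j - 1)
        = (∑ j ∈ Finset.range n, y ^ j) - (n : ℝ) := by
      rw [Finset.sum_sub_distrib]
      simp
    have e5 := geom_sum_mul y n
    calc y ^ n - (n : ℝ) * y + ((n : ℝ) - 1)
        = (y - 1) * ((∑ j ∈ Finset.range n, y ^ j) - (n : ℝ)) := by linear_combination (-1 : ℝ) * e5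
      _ = (y - 1) * ((y - 1) * ∑ j ∈ Finset.range n, ∑ i ∈ Finset.range j, y ^ i) := by
          rw [e2, e3]
      _ = (y - 1) ^ 2 * ∑ j ∈ Finset.range n, ∑ i ∈ Finset.range j, y ^ i := by ring
  have h5 : (y - 1) ^ 2 ≤ 0 := by nlinarith [hQ1, sq_nonneg (y - 1)]
  have h6 : (y - 1) ^ 2 = 0 := le_antisymm h5 (sq_nonneg _)
  have h7 : y - 1 = 0 := by
    exact (pow_eq_zero_iff two_ne_zero).mp h6
  linarith

private lemma root_aux (n : ℕ) (hn : 3 ≤ n) (c : ℝ) (hc1 : 1 < c)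
    (hroot : c ^ n = (n : ℝ) * c + ((n : ℝ) - 1)) (y : ℝ) (hy : 0 ≤ y) :
    (y ^ n ≤ (n : ℝ) * y + ((n : ℝ) - 1) → y ≤ c) ∧
    ((n : ℝ) * y + ((n : ℝ) - 1) ≤ y ^ n → c ≤ y) := by
  have hn' : (3 : ℝ) ≤ (n : ℝ) := by exact_mod_cast hn
  have hc0 : (0 : ℝ) < c := by linarith
  have hcn1 : (n : ℝ) < c ^ (n - 1) := by
    have hnn : n - 1 + 1 = n := by omega
    have hp : c ^ (n - 1) * c = (n : ℝ) * c + ((n : ℝ) - 1) := by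
      rw [← pow_succ, hnn]; exact hroot
    nlinarith [hp, hc0]
  have hfac : (∑ i ∈ Finset.range n, y ^ i * c ^ (n - 1 - i)) * (y - c) = y ^ n - c ^ n :=
    geom_sum₂_mul y c n
  have hSge : c ^ (n - 1) ≤ ∑ i ∈ Finset.range n, y ^ i * c ^ (n - 1 - i) := by
    have h2 : y ^ 0 * c ^ (n - 1 - 0) ≤ ∑ i ∈ Finset.range n, y ^ i * c ^ (n - 1 - i) := by
      apply Finset.single_le_sum (f := fun i => y ^ i * c ^ (n - 1 - i))
      · intro i _; positivity
      · exact Finset.mem_range.mpr (by omega)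
    simpa using h2
  have hSpos : (n : ℝ) < ∑ i ∈ Finset.range n, y ^ i * c ^ (n - 1 - i) :=
    lt_of_lt_of_le hcn1 hSge
  constructor
  · intro hle
    by_contra hcon
    push_neg at hcon
    nlinarith [hfac, hroot, mul_pos (sub_pos.mpr hSpos) (sub_pos.mpr hcon)]
  · intro hge
    by_contra hcon
    push_neg at hcon
    nlinarith [hfac, hroot, mul_pos (sub_pos.mpr hSpos) (sub_pos.mpr hcon)]

private lemma core_inc (n : ℕ) (hn : 3 ≤ n) (g : ℝ → ℝ) (S : Set ℝ)
    (hSne : S.Nonempty) (hmaps : Set.MapsTo g S S)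
    (hsgn : (∀ t ∈ S, 0 < g t - t) ∨ (∀ t ∈ S, g t - t < 0))
    (hlin : ∀ t ∈ S, g (g^[n] t) - g^[n] t
      = (n : ℝ) * (g (g t) - g t) - ((n : ℝ) - 1) * (g t - t))
    (hsum : ∀ t ∈ S, ∑ j ∈ Finset.range (n - 1), (g (g^[j + 1] t) - g^[j + 1] t)
      = ((n : ℝ) - 1) * (g t - t)) :
    ∀ t ∈ S, g (g t) - g t = g t - t := by
  have hn' : (3 : ℝ) ≤ (n : ℝ) := by exact_mod_cast hn
  set h : ℝ → ℝ := fun t => g t - t with hh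
  set r : ℝ → ℝ := fun t => h (g t) / h t with hr
  have hiter : ∀ (k : ℕ), ∀ t ∈ S, g^[k] t ∈ S := fun k t ht => hmaps.iterate k ht
  have hnz : ∀ t ∈ S, h t ≠ 0 := by
    intro t ht
    rcases hsgn with hs | hs
    · exact ne_of_gt (hs t ht)
    · exact ne_of_lt (hs t ht)
  have hr0 : ∀ t ∈ S, 0 < r t := by
    intro t ht
    rcases hsgn with hs | hs
    · exact div_pos (hs (g t) (hmaps ht)) (hs t ht)
    · exact div_pos_of_neg_of_neg (hs (g t) (hmaps ht)) (hs t ht)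
  have hstep : ∀ t ∈ S, h (g t) = r t * h t := by
    intro t ht
    show h (g t) = h (g t) / h t * h t
    rw [div_mul_cancel₀ _ (hnz t ht)]
  have hprod : ∀ (k : ℕ), ∀ t ∈ S,
      h (g^[k] t) = (∏ i ∈ Finset.range k, r (g^[i] t)) * h t := by
    intro k
    induction k with
    | zero => intro t ht; simp
    | succ k ih =>
      intro t ht
      rw [Function.iterate_succ_apply', hstep _ (hiter k t ht), ih t ht,
        Finset.prod_range_succ]
      ring
  have hident : ∀ t ∈ S, (∏ i ∈ Finset.range n, r (g^[i] t)) = (n : ℝ) * r t - ((n : ℝ) - 1) := by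
    intro t ht
    have h1 := hlin t ht
    have h2 := hprod n t ht
    have h3 := hstep t ht
    have h4 : (∏ i ∈ Finset.range n, r (g^[i] t)) * h t
        = ((n : ℝ) * r t - ((n : ℝ) - 1)) * h t := by
      rw [← h2]
      show h (g^[n] t) = _
      calc h (g^[n] t) = (n : ℝ) * h (g t) - ((n : ℝ) - 1) * h t := h1
        _ = ((n : ℝ) * r t - ((n : ℝ) - 1)) * h t := by rw [h3]; ring
    exact mul_right_cancel₀ (hnz t ht) h4
  -- infimum
  set ρ : ℝ := sInf (r '' S) with hρ
  have himgne : (r '' S).Nonempty := hSne.image r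
  have hbdd : BddBelow (r '' S) := by
    refine ⟨0, ?_⟩
    rintro v ⟨t, ht, rfl⟩
    exact (hr0 t ht).le
  have hρ0 : 0 ≤ ρ := le_csInf himgne (by rintro v ⟨t, ht, rfl⟩; exact (hr0 t ht).le)
  have hρle : ∀ t ∈ S, ρ ≤ r t := fun t ht => csInf_le hbdd ⟨t, ht, rfl⟩
  have hnn : n - 1 + 1 = n := by omega
  have hsplit : ∀ t ∈ S, (∏ i ∈ Finset.range n, r (g^[i] t))
      = (∏ i ∈ Finset.range (n - 1), r (g^[i + 1] t)) * r t := by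
    intro t ht
    conv_lhs => rw [← hnn]
    rw [Finset.prod_range_succ']
    simp
  have hPge : ∀ t ∈ S, ρ ^ (n - 1) ≤ ∏ i ∈ Finset.range (n - 1), r (g^[i + 1] t) := by
    intro t ht
    calc ρ ^ (n - 1) = ∏ _i ∈ Finset.range (n - 1), ρ := by
          rw [Finset.prod_const, Finset.card_range]
      _ ≤ ∏ i ∈ Finset.range (n - 1), r (g^[i + 1] t) := by
          apply Finset.prod_le_prod
          · intro i _; exact hρ0
          · intro i _; exact hρle _ (hiter (i + 1) t ht)
  have hkey1 : ∀ t ∈ S, ((n : ℝ) - 1) ≤ r t * ((n : ℝ) - ρ ^ (n - 1)) := by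
    intro t ht
    have h1 := hident t ht
    rw [hsplit t ht] at h1
    nlinarith [hPge t ht, (hr0 t ht).le, hr0 t ht]
  have hd : 0 < (n : ℝ) - ρ ^ (n - 1) := by
    obtain ⟨t, ht⟩ := hSne
    by_contra hcon
    push_neg at hcon
    nlinarith [hkey1 t ht, hr0 t ht, mul_nonpos_of_nonneg_of_nonpos (hr0 t ht).le hcon]
  have hρge : ((n : ℝ) - 1) / ((n : ℝ) - ρ ^ (n - 1)) ≤ ρ := by
    apply le_csInf himgne
    rintro v ⟨t, ht, rfl⟩
    rw [div_le_iff₀ hd]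
    linarith [hkey1 t ht]
  have hψ : ρ ^ n - (n : ℝ) * ρ + ((n : ℝ) - 1) ≤ 0 := by
    rw [div_le_iff₀ hd] at hρge
    have : ρ ^ (n - 1) * ρ = ρ ^ n := by rw [← pow_succ, hnn]
    nlinarith [hρge]
  have hρ1 : ρ = 1 := geom_aux n hn ρ hρ0 hψ
  have hr1 : ∀ t ∈ S, 1 ≤ r t := fun t ht => hρ1 ▸ hρle t ht
  -- conclusion
  intro t ht
  have hsum' := hsum t ht
  rcases hsgn with hs | hs
  · -- positive case : h nondecreasing along orbit
    have hmono : ∀ (k : ℕ), ∀ s ∈ S, h s ≤ h (g^[k] s) := by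
      intro k
      induction k with
      | zero => intro s _; simp
      | succ k ih =>
        intro s hs'
        have h1 := ih s hs'
        have h2 : h (g^[k] s) ≤ h (g (g^[k] s)) := by
          have hA := hr1 _ (hiter k s hs')
          have hp : 0 < h (g^[k] s) := hs _ (hiter k s hs')
          have hB := hstep _ (hiter k s hs')
          nlinarith [mul_nonneg (sub_nonneg.mpr hA) hp.le]
        rw [Function.iterate_succ_apply']
        linarith
    have hterm : ∀ j ∈ Finset.range (n - 1), h (g t) ≤ h (g^[j + 1] t) := by
      intro j _
      have := hmono j (g t) (hmaps ht)
      rwa [← Function.iterate_succ_apply] at this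
    have hsl : ((n : ℝ) - 1) * h (g t) ≤ ∑ j ∈ Finset.range (n - 1), h (g^[j + 1] t) := by
      calc ((n : ℝ) - 1) * h (g t) = ∑ _j ∈ Finset.range (n - 1), h (g t) := by
            rw [Finset.sum_const, Finset.card_range]
            have : ((n - 1 : ℕ) : ℝ) = (n : ℝ) - 1 := by
              have : (1 : ℕ) ≤ n := by omega
              push_cast [Nat.cast_sub this]
              ring
            rw [nsmul_eq_mul, this]
        _ ≤ _ := Finset.sum_le_sum hterm
    have hsum'' : ∑ j ∈ Finset.range (n - 1), h (g^[j + 1] t) = ((n : ℝ) - 1) * h t := hsum'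
    have hgt : h (g t) ≤ h t := by nlinarith [hsl, hsum'']
    have hge : h t ≤ h (g t) := by
      have hA := hr1 t ht
      have hp : 0 < h t := hs t ht
      have hB := hstep t ht
      nlinarith [mul_nonneg (sub_nonneg.mpr hA) hp.le]
    have : h (g t) = h t := le_antisymm hgt hge
    show h (g t) = h t
    exact this
  · -- negative case
    have hmono : ∀ (k : ℕ), ∀ s ∈ S, h (g^[k] s) ≤ h s := by
      intro k
      induction k with
      | zero => intro s _; simp
      | succ k ih =>
        intro s hs'
        have h1 := ih s hs'
        have h2 : h (g (g^[k] s)) ≤ h (g^[k] s) := by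
          have hA := hr1 _ (hiter k s hs')
          have hp : h (g^[k] s) < 0 := hs _ (hiter k s hs')
          have hB := hstep _ (hiter k s hs')
          nlinarith [mul_nonneg (sub_nonneg.mpr hA) (neg_nonneg.mpr hp.le)]
        rw [Function.iterate_succ_apply']
        linarith
    have hterm : ∀ j ∈ Finset.range (n - 1), h (g^[j + 1] t) ≤ h (g t) := by
      intro j _
      have := hmono j (g t) (hmaps ht)
      rwa [← Function.iterate_succ_apply] at this
    have hsl : ∑ j ∈ Finset.range (n - 1), h (g^[j + 1] t) ≤ ((n : ℝ) - 1) * h (g t) := by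
      calc ∑ j ∈ Finset.range (n - 1), h (g^[j + 1] t)
          ≤ ∑ _j ∈ Finset.range (n - 1), h (g t) := Finset.sum_le_sum hterm
        _ = ((n : ℝ) - 1) * h (g t) := by
            rw [Finset.sum_const, Finset.card_range]
            have h9 : ((n - 1 : ℕ) : ℝ) = (n : ℝ) - 1 := by
              have : (1 : ℕ) ≤ n := by omega
              push_cast [Nat.cast_sub this]
              ring
            rw [nsmul_eq_mul, h9]
    have hsum'' : ∑ j ∈ Finset.range (n - 1), h (g^[j + 1] t) = ((n : ℝ) - 1) * h t := hsum'
    have hgt : h t ≤ h (g t) := by nlinarith [hsl, hsum'']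
    have hge : h (g t) ≤ h t := by
      have hA := hr1 t ht
      have hp : h t < 0 := hs t ht
      have hB := hstep t ht
      nlinarith [mul_nonneg (sub_nonneg.mpr hA) (neg_nonneg.mpr hp.le)]
    show h (g t) = h t
    exact le_antisymm hge hgt

private lemma prod_id_dec (n : ℕ) (hn : 3 ≤ n) (hodd : Odd n) (g u : ℝ → ℝ) (S : Set ℝ)
    (hmaps : Set.MapsTo g S S)
    (hnz : ∀ t ∈ S, g t - t ≠ 0)
    (hu : ∀ t ∈ S, g (g t) - g t = -(u t) * (g t - t))
    (hlin : ∀ t ∈ S, g (g^[n] t) - g^[n] t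
      = (n : ℝ) * (g (g t) - g t) - ((n : ℝ) - 1) * (g t - t)) :
    ∀ t ∈ S, (∏ i ∈ Finset.range n, u (g^[i] t)) = (n : ℝ) * u t + ((n : ℝ) - 1) := by
  set h : ℝ → ℝ := fun t => g t - t with hh
  have hiter : ∀ (k : ℕ), ∀ t ∈ S, g^[k] t ∈ S := fun k t ht => hmaps.iterate k ht
  have key : ∀ (k : ℕ), ∀ t ∈ S,
      h (g^[k] t) = (-1 : ℝ) ^ k * (∏ i ∈ Finset.range k, u (g^[i] t)) * h t := by
    intro k
    induction k with
    | zero => intro t ht; simp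
    | succ k ih =>
      intro t ht
      have h1 : h (g (g^[k] t)) = -(u (g^[k] t)) * h (g^[k] t) := hu _ (hiter k t ht)
      rw [Function.iterate_succ_apply', h1, ih t ht, Finset.prod_range_succ]
      ring
  intro t ht
  have h1 : h (g^[n] t) = (n : ℝ) * h (g t) - ((n : ℝ) - 1) * h t := hlin t ht
  have h2 := key n t ht
  have h3 : h (g t) = -(u t) * h t := hu t ht
  have h4 : (-1 : ℝ) ^ n = -1 := Odd.neg_one_pow hodd
  rw [h4] at h2
  have h5 : (-1 * ∏ i ∈ Finset.range n, u (g^[i] t)) * h t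
      = (-((n : ℝ) * u t) - ((n : ℝ) - 1)) * h t := by
    rw [← h2, h1, h3]; ring
  have h6 := mul_right_cancel₀ (hnz t ht) h5
  linarith

private lemma bstepB_arith (n : ℕ) (hn : 3 ≤ n) (u0 u1 un B η : ℝ)
    (h1 : 1 ≤ u0) (h2 : u0 ≤ 2 * (n : ℝ) - 1)
    (hB0 : u0 ≤ B) (hB1 : u1 ≤ B) (hη : 0 ≤ η)
    (hEQ : un * ((n : ℝ) * u0 + ((n : ℝ) - 1)) = u0 * ((n : ℝ) * u1 + ((n : ℝ) - 1)))
    (hun : B - η ≤ un) :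
    B - η / (((n : ℝ) - 1) / (2 * (n : ℝ) ^ 2)) ≤ u0 ∧
    B - η / (((n : ℝ) - 1) / (2 * (n : ℝ) ^ 2)) ≤ u1 := by
  have hn' : (3 : ℝ) ≤ (n : ℝ) := by exact_mod_cast hn
  have hδ : 0 < ((n : ℝ) - 1) / (2 * (n : ℝ) ^ 2) := div_pos (by linarith) (by positivity)
  have hZ : (0 : ℝ) < (n : ℝ) * u0 + ((n : ℝ) - 1) := by nlinarith
  have hZ' : (n : ℝ) * u0 + ((n : ℝ) - 1) ≤ 2 * (n : ℝ) ^ 2 := by nlinarith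
  have s1 : (B - η) * ((n : ℝ) * u0 + ((n : ℝ) - 1)) ≤ un * ((n : ℝ) * u0 + ((n : ℝ) - 1)) :=
    mul_le_mul_of_nonneg_right hun hZ.le
  constructor
  · have hEQA : un * ((n : ℝ) * u0 + ((n : ℝ) - 1))
        = u0 * ((n : ℝ) * u0 + ((n : ℝ) - 1)) + (n : ℝ) * u0 * (u1 - u0) := by
      linear_combination hEQ
    have s2 : (n : ℝ) * u0 * (u1 - u0) ≤ (n : ℝ) * u0 * (B - u0) :=
      mul_le_mul_of_nonneg_left (sub_le_sub_right hB1 u0) (by nlinarith)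
    have s4 : (B - u0) * ((n : ℝ) - 1) ≤ η * ((n : ℝ) * u0 + ((n : ℝ) - 1)) := by
      nlinarith [s1, hEQA, s2]
    have s6 : (B - u0) * ((n : ℝ) - 1) ≤ η * (2 * (n : ℝ) ^ 2) :=
      le_trans s4 (mul_le_mul_of_nonneg_left hZ' hη)
    have s7 : B - u0 ≤ η / (((n : ℝ) - 1) / (2 * (n : ℝ) ^ 2)) := by
      rw [div_div_eq_mul_div, le_div_iff₀ (by linarith : (0:ℝ) < (n : ℝ) - 1)]
      linarith [s6]
    linarith
  · have hEQB : un * ((n : ℝ) * u0 + ((n : ℝ) - 1))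
        = u1 * ((n : ℝ) * u0 + ((n : ℝ) - 1)) + ((n : ℝ) - 1) * (u0 - u1) := by
      linear_combination hEQ
    have s2 : ((n : ℝ) - 1) * (u0 - u1) ≤ ((n : ℝ) - 1) * (B - u1) :=
      mul_le_mul_of_nonneg_left (sub_le_sub_right hB0 u1) (by linarith)
    have s4 : (B - u1) * ((n : ℝ) * u0) ≤ η * ((n : ℝ) * u0 + ((n : ℝ) - 1)) := by
      nlinarith [s1, hEQB, s2]
    have s5 : (B - u1) * ((n : ℝ) - 1) ≤ (B - u1) * ((n : ℝ) * u0) :=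
      mul_le_mul_of_nonneg_left (by nlinarith) (sub_nonneg.mpr hB1)
    have s6 : (B - u1) * ((n : ℝ) - 1) ≤ η * (2 * (n : ℝ) ^ 2) :=
      le_trans (le_trans s5 s4) (mul_le_mul_of_nonneg_left hZ' hη)
    have s7 : B - u1 ≤ η / (((n : ℝ) - 1) / (2 * (n : ℝ) ^ 2)) := by
      rw [div_div_eq_mul_div, le_div_iff₀ (by linarith : (0:ℝ) < (n : ℝ) - 1)]
      linarith [s6]
    linarith

private lemma bstepA_arith (n : ℕ) (hn : 3 ≤ n) (u0 u1 un A η : ℝ)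
    (h1 : 1 ≤ u0) (h2 : u0 ≤ 2 * (n : ℝ) - 1)
    (hA0 : A ≤ u0) (hA1 : A ≤ u1) (hη : 0 ≤ η)
    (hEQ : un * ((n : ℝ) * u0 + ((n : ℝ) - 1)) = u0 * ((n : ℝ) * u1 + ((n : ℝ) - 1)))
    (hun : un ≤ A + η) :
    u0 ≤ A + η / (((n : ℝ) - 1) / (2 * (n : ℝ) ^ 2)) ∧
    u1 ≤ A + η / (((n : ℝ) - 1) / (2 * (n : ℝ) ^ 2)) := by
  have hn' : (3 : ℝ) ≤ (n : ℝ) := by exact_mod_cast hn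
  have hδ : 0 < ((n : ℝ) - 1) / (2 * (n : ℝ) ^ 2) := div_pos (by linarith) (by positivity)
  have hZ : (0 : ℝ) < (n : ℝ) * u0 + ((n : ℝ) - 1) := by nlinarith
  have hZ' : (n : ℝ) * u0 + ((n : ℝ) - 1) ≤ 2 * (n : ℝ) ^ 2 := by nlinarith
  have s1 : un * ((n : ℝ) * u0 + ((n : ℝ) - 1)) ≤ (A + η) * ((n : ℝ) * u0 + ((n : ℝ) - 1)) :=
    mul_le_mul_of_nonneg_right hun hZ.le
  constructor
  · have hEQA : un * ((n : ℝ) * u0 + ((n : ℝ) - 1))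
        = u0 * ((n : ℝ) * u0 + ((n : ℝ) - 1)) + (n : ℝ) * u0 * (u1 - u0) := by
      linear_combination hEQ
    have s2 : (n : ℝ) * u0 * (A - u0) ≤ (n : ℝ) * u0 * (u1 - u0) :=
      mul_le_mul_of_nonneg_left (sub_le_sub_right hA1 u0) (by nlinarith)
    have s4 : (u0 - A) * ((n : ℝ) - 1) ≤ η * ((n : ℝ) * u0 + ((n : ℝ) - 1)) := by
      nlinarith [s1, hEQA, s2]
    have s6 : (u0 - A) * ((n : ℝ) - 1) ≤ η * (2 * (n : ℝ) ^ 2) :=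
      le_trans s4 (mul_le_mul_of_nonneg_left hZ' hη)
    have s7 : u0 - A ≤ η / (((n : ℝ) - 1) / (2 * (n : ℝ) ^ 2)) := by
      rw [div_div_eq_mul_div, le_div_iff₀ (by linarith : (0:ℝ) < (n : ℝ) - 1)]
      linarith [s6]
    linarith
  · have hEQB : un * ((n : ℝ) * u0 + ((n : ℝ) - 1))
        = u1 * ((n : ℝ) * u0 + ((n : ℝ) - 1)) + ((n : ℝ) - 1) * (u0 - u1) := by
      linear_combination hEQ
    have s2 : ((n : ℝ) - 1) * (A - u1) ≤ ((n : ℝ) - 1) * (u0 - u1) :=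
      mul_le_mul_of_nonneg_left (sub_le_sub_right hA0 u1) (by linarith)
    have s4 : (u1 - A) * ((n : ℝ) * u0) ≤ η * ((n : ℝ) * u0 + ((n : ℝ) - 1)) := by
      nlinarith [s1, hEQB, s2]
    have s5 : (u1 - A) * ((n : ℝ) - 1) ≤ (u1 - A) * ((n : ℝ) * u0) :=
      mul_le_mul_of_nonneg_left (by nlinarith) (sub_nonneg.mpr hA1)
    have s6 : (u1 - A) * ((n : ℝ) - 1) ≤ η * (2 * (n : ℝ) ^ 2) :=
      le_trans (le_trans s5 s4) (mul_le_mul_of_nonneg_left hZ' hη)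
    have s7 : u1 - A ≤ η / (((n : ℝ) - 1) / (2 * (n : ℝ) ^ 2)) := by
      rw [div_div_eq_mul_div, le_div_iff₀ (by linarith : (0:ℝ) < (n : ℝ) - 1)]
      linarith [s6]
    linarith

private lemma core_dec (n : ℕ) (hn : 3 ≤ n) (hodd : Odd n) (g u : ℝ → ℝ) (S : Set ℝ)
    (hSne : S.Nonempty) (hmaps : Set.MapsTo g S S)
    (hsurj : ∀ s ∈ S, ∃ t ∈ S, g t = s)
    (hnz : ∀ t ∈ S, g t - t ≠ 0)
    (hu : ∀ t ∈ S, g (g t) - g t = -(u t) * (g t - t))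
    (hu1 : ∀ t ∈ S, 1 < u t)
    (hlin : ∀ t ∈ S, g (g^[n] t) - g^[n] t
      = (n : ℝ) * (g (g t) - g t) - ((n : ℝ) - 1) * (g t - t))
    (c : ℝ) (hc1 : 1 < c) (hroot : c ^ n = (n : ℝ) * c + ((n : ℝ) - 1)) :
    ∀ t ∈ S, u t = c := by
  have hn' : (3 : ℝ) ≤ (n : ℝ) := by exact_mod_cast hn
  have hiter : ∀ (k : ℕ), ∀ t ∈ S, g^[k] t ∈ S := fun k t ht => hmaps.iterate k ht
  have hprodS := prod_id_dec n hn hodd g u S hmaps hnz hu hlin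
  -- upper bound 2n-1 on u over S
  have hub : ∀ s ∈ S, u s ≤ 2 * (n : ℝ) - 1 := by
    intro s hs
    obtain ⟨t, ht, rfl⟩ := hsurj s hs
    have e1 := hprodS t ht
    obtain ⟨m, rfl⟩ : ∃ m, n = m + 2 := ⟨n - 2, by omega⟩
    rw [Finset.prod_range_succ', Finset.prod_range_succ'] at e1
    simp only [Function.iterate_zero_apply, Nat.zero_add, Function.iterate_one] at e1
    have hP : (1:ℝ) ≤ ∏ i ∈ Finset.range m, u (g^[i + 1 + 1] t) := by
      have := Finset.prod_le_prod (f := fun _ : ℕ => (1:ℝ))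
        (g := fun i => u (g^[i + 1 + 1] t)) (s := Finset.range m)
        (fun i _ => zero_le_one) (fun i _ => (hu1 _ (hiter (i + 1 + 1) t ht)).le)
      simpa using this
    have hut : 1 ≤ u t := (hu1 t ht).le
    have hYpos : 0 < u t := lt_trans one_pos (hu1 t ht)
    have hugt : 0 < u (g t) := lt_trans one_pos (hu1 _ (hmaps ht))
    have hXY : u (g t) * u t ≤ ((m + 2 : ℕ) : ℝ) * u t + (((m + 2 : ℕ) : ℝ) - 1) := by
      nlinarith [e1, mul_nonneg (sub_nonneg.mpr hP) (mul_pos hugt hYpos).le]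
    have hfin : (u (g t) - (2 * ((m + 2 : ℕ) : ℝ) - 1)) * u t ≤ 0 := by
      have hcast : (3:ℝ) ≤ ((m + 2 : ℕ) : ℝ) := by exact_mod_cast hn
      nlinarith [hXY, hut, hcast]
    nlinarith [hfin, hYpos]
  -- sup and inf
  set B : ℝ := sSup (u '' S) with hB
  set A : ℝ := sInf (u '' S) with hA
  have himgne : (u '' S).Nonempty := hSne.image u
  have hbddA : BddAbove (u '' S) := by
    refine ⟨2 * (n : ℝ) - 1, ?_⟩
    rintro v ⟨t, ht, rfl⟩
    exact hub t ht
  have hbddB : BddBelow (u '' S) := by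
    refine ⟨1, ?_⟩
    rintro v ⟨t, ht, rfl⟩
    exact (hu1 t ht).le
  have huB : ∀ t ∈ S, u t ≤ B := fun t ht => le_csSup hbddA ⟨t, ht, rfl⟩
  have huA : ∀ t ∈ S, A ≤ u t := fun t ht => csInf_le hbddB ⟨t, ht, rfl⟩
  have hA1 : 1 ≤ A := le_csInf himgne (by rintro v ⟨t, ht, rfl⟩; exact (hu1 t ht).le)
  have hAB : A ≤ B := by
    obtain ⟨t, ht⟩ := hSne
    exact le_trans (huA t ht) (huB t ht)
  have hB0 : 0 ≤ B := by linarith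
  -- the pointwise equation
  have hEQpt : ∀ t ∈ S, u (g^[n] t) * ((n : ℝ) * u t + ((n : ℝ) - 1))
      = u t * ((n : ℝ) * u (g t) + ((n : ℝ) - 1)) := by
    intro t ht
    have e1 := hprodS t ht
    have e2 := hprodS (g t) (hmaps ht)
    have e2' : (∏ i ∈ Finset.range n, u (g^[i + 1] t)) = (n : ℝ) * u (g t) + ((n : ℝ) - 1) := by
      rw [← e2]
      exact Finset.prod_congr rfl fun i _ => by rw [Function.iterate_succ_apply]
    have e4 := Finset.prod_range_succ (fun i => u (g^[i] t)) n
    have e5 := Finset.prod_range_succ' (fun i => u (g^[i] t)) n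
    simp only [Function.iterate_zero_apply] at e5
    rw [e4] at e5
    rw [e1, e2'] at e5
    linarith [e5]
  -- backward orbits
  have hback : ∀ (N : ℕ), ∀ s ∈ S, ∃ t ∈ S, g^[N] t = s := by
    intro N
    induction N with
    | zero => intro s hs; exact ⟨s, hs, rfl⟩
    | succ N ih =>
      intro s hs
      obtain ⟨t₁, ht₁, hT₁⟩ := ih s hs
      obtain ⟨t₂, ht₂, hT₂⟩ := hsurj t₁ ht₁
      exact ⟨t₂, ht₂, by rw [Function.iterate_succ_apply, hT₂, hT₁]⟩
  set D : ℝ := ((n : ℝ) - 1) / (2 * (n : ℝ) ^ 2) with hD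
  have hDpos : 0 < D := div_pos (by linarith) (by positivity)
  -- B-side block
  have hblockB : ∀ ε : ℝ, 0 < ε → ∃ t₀ ∈ S, ∀ r, r ≤ n - 1 →
      B - ε / D ^ (n - 1) ≤ u (g^[r] t₀) := by
    intro ε hε
    obtain ⟨v, ⟨s₀, hs₀, rfl⟩, hv⟩ := exists_lt_of_lt_csSup himgne (show B - ε < B by linarith)
    obtain ⟨t₀, ht₀, hT⟩ := hback (n * (n - 1)) s₀ hs₀
    refine ⟨t₀, ht₀, ?_⟩
    have main : ∀ m : ℕ, m ≤ n - 1 → ∀ r : ℕ, r ≤ m →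
        B - ε / D ^ m ≤ u (g^[n * (n - 1 - m) + r] t₀) := by
      intro m
      induction m with
      | zero =>
        intro _ r hr
        have hr0 : r = 0 := Nat.le_zero.mp hr
        subst hr0
        rw [Nat.sub_zero, Nat.add_zero, hT, pow_zero, div_one]
        linarith
      | succ m ih =>
        intro hm1 r hr
        have hm : m ≤ n - 1 := le_trans (Nat.le_succ m) hm1
        have hηpos : 0 < ε / D ^ m := div_pos hε (pow_pos hDpos m)
        have hDD : ε / D ^ m / D = ε / D ^ (m + 1) := by
          rw [div_div, ← pow_succ]
        rcases Nat.lt_or_ge r (m + 1) with hrm | hrm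
        · -- r ≤ m : use first component at base k
          have hrm' : r ≤ m := by omega
          set k := n * (n - 1 - (m + 1)) + r with hk
          have harith : n + k = n * (n - 1 - m) + r := by
            have h9 : n - 1 - (m + 1) + 1 = n - 1 - m := by omega
            calc n + k = n * (n - 1 - (m + 1)) + n + r := by rw [hk]; ring
              _ = n * (n - 1 - (m + 1) + 1) + r := by rw [Nat.mul_succ]
              _ = n * (n - 1 - m) + r := by rw [h9]
          have htk : g^[k] t₀ ∈ S := hiter k t₀ ht₀
          have hbase : B - ε / D ^ m ≤ u (g^[n] (g^[k] t₀)) := by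
            rw [← Function.iterate_add_apply, harith]
            exact ih hm r hrm'
          have := (bstepB_arith n hn (u (g^[k] t₀)) (u (g (g^[k] t₀))) (u (g^[n] (g^[k] t₀)))
            B (ε / D ^ m) (hu1 _ htk).le (hub _ htk) (huB _ htk)
            (huB _ (hmaps htk)) hηpos.le (hEQpt _ htk) hbase).1
          rw [← hD, hDD] at this
          exact this
        · -- r = m + 1 : use second component at base k₀
          have hrm' : r = m + 1 := by omega
          subst hrm'
          set k := n * (n - 1 - (m + 1)) + m with hk
          have harith : n + k = n * (n - 1 - m) + m := by
            have h9 : n - 1 - (m + 1) + 1 = n - 1 - m := by omega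
            calc n + k = n * (n - 1 - (m + 1)) + n + m := by rw [hk]; ring
              _ = n * (n - 1 - (m + 1) + 1) + m := by rw [Nat.mul_succ]
              _ = n * (n - 1 - m) + m := by rw [h9]
          have htk : g^[k] t₀ ∈ S := hiter k t₀ ht₀
          have hbase : B - ε / D ^ m ≤ u (g^[n] (g^[k] t₀)) := by
            rw [← Function.iterate_add_apply, harith]
            exact ih hm m le_rfl
          have h2 := (bstepB_arith n hn (u (g^[k] t₀)) (u (g (g^[k] t₀))) (u (g^[n] (g^[k] t₀)))
            B (ε / D ^ m) (hu1 _ htk).le (hub _ htk) (huB _ htk)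
            (huB _ (hmaps htk)) hηpos.le (hEQpt _ htk) hbase).2
          rw [← hD, hDD] at h2
          have hsucc : n * (n - 1 - (m + 1)) + (m + 1) = k + 1 := by rw [hk]; omega
          have hpos' : g^[n * (n - 1 - (m + 1)) + (m + 1)] t₀ = g (g^[k] t₀) := by
            rw [hsucc, Function.iterate_succ_apply']
          rw [hpos']
          exact h2
    intro r hr
    have := main (n - 1) le_rfl r hr
    rwa [Nat.sub_self, Nat.mul_zero, Nat.zero_add] at this
  -- A-side block
  have hblockA : ∀ ε : ℝ, 0 < ε → ∃ t₀ ∈ S, ∀ r, r ≤ n - 1 →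
      u (g^[r] t₀) ≤ A + ε / D ^ (n - 1) := by
    intro ε hε
    obtain ⟨v, ⟨s₀, hs₀, rfl⟩, hv⟩ := exists_lt_of_csInf_lt himgne (show A < A + ε by linarith)
    obtain ⟨t₀, ht₀, hT⟩ := hback (n * (n - 1)) s₀ hs₀
    refine ⟨t₀, ht₀, ?_⟩
    have main : ∀ m : ℕ, m ≤ n - 1 → ∀ r : ℕ, r ≤ m →
        u (g^[n * (n - 1 - m) + r] t₀) ≤ A + ε / D ^ m := by
      intro m
      induction m with
      | zero =>
        intro _ r hr
        have hr0 : r = 0 := Nat.le_zero.mp hr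
        subst hr0
        rw [Nat.sub_zero, Nat.add_zero, hT, pow_zero, div_one]
        linarith
      | succ m ih =>
        intro hm1 r hr
        have hm : m ≤ n - 1 := le_trans (Nat.le_succ m) hm1
        have hηpos : 0 < ε / D ^ m := div_pos hε (pow_pos hDpos m)
        have hDD : ε / D ^ m / D = ε / D ^ (m + 1) := by
          rw [div_div, ← pow_succ]
        rcases Nat.lt_or_ge r (m + 1) with hrm | hrm
        · have hrm' : r ≤ m := by omega
          set k := n * (n - 1 - (m + 1)) + r with hk
          have harith : n + k = n * (n - 1 - m) + r := by
            have h9 : n - 1 - (m + 1) + 1 = n - 1 - m := by omega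
            calc n + k = n * (n - 1 - (m + 1)) + n + r := by rw [hk]; ring
              _ = n * (n - 1 - (m + 1) + 1) + r := by rw [Nat.mul_succ]
              _ = n * (n - 1 - m) + r := by rw [h9]
          have htk : g^[k] t₀ ∈ S := hiter k t₀ ht₀
          have hbase : u (g^[n] (g^[k] t₀)) ≤ A + ε / D ^ m := by
            rw [← Function.iterate_add_apply, harith]
            exact ih hm r hrm'
          have := (bstepA_arith n hn (u (g^[k] t₀)) (u (g (g^[k] t₀))) (u (g^[n] (g^[k] t₀)))
            A (ε / D ^ m) (hu1 _ htk).le (hub _ htk) (huA _ htk)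
            (huA _ (hmaps htk)) hηpos.le (hEQpt _ htk) hbase).1
          rw [← hD, hDD] at this
          exact this
        · have hrm' : r = m + 1 := by omega
          subst hrm'
          set k := n * (n - 1 - (m + 1)) + m with hk
          have harith : n + k = n * (n - 1 - m) + m := by
            have h9 : n - 1 - (m + 1) + 1 = n - 1 - m := by omega
            calc n + k = n * (n - 1 - (m + 1)) + n + m := by rw [hk]; ring
              _ = n * (n - 1 - (m + 1) + 1) + m := by rw [Nat.mul_succ]
              _ = n * (n - 1 - m) + m := by rw [h9]
          have htk : g^[k] t₀ ∈ S := hiter k t₀ ht₀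
          have hbase : u (g^[n] (g^[k] t₀)) ≤ A + ε / D ^ m := by
            rw [← Function.iterate_add_apply, harith]
            exact ih hm m le_rfl
          have h2 := (bstepA_arith n hn (u (g^[k] t₀)) (u (g (g^[k] t₀))) (u (g^[n] (g^[k] t₀)))
            A (ε / D ^ m) (hu1 _ htk).le (hub _ htk) (huA _ htk)
            (huA _ (hmaps htk)) hηpos.le (hEQpt _ htk) hbase).2
          rw [← hD, hDD] at h2
          have hsucc : n * (n - 1 - (m + 1)) + (m + 1) = k + 1 := by rw [hk]; omega
          have hpos' : g^[n * (n - 1 - (m + 1)) + (m + 1)] t₀ = g (g^[k] t₀) := by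
            rw [hsucc, Function.iterate_succ_apply']
          rw [hpos']
          exact h2
    intro r hr
    have := main (n - 1) le_rfl r hr
    rwa [Nat.sub_self, Nat.mul_zero, Nat.zero_add] at this
  -- B^n ≤ nB + (n-1)
  have hBbound : ∀ e : ℝ, 0 < e → (B - e) ^ n ≤ (n : ℝ) * B + ((n : ℝ) - 1) := by
    intro e he
    obtain ⟨t₀, ht₀, hblk⟩ := hblockB (e * D ^ (n - 1)) (by positivity)
    have hee : e * D ^ (n - 1) / D ^ (n - 1) = e := by
      field_simp
    have hlow : ∀ i ∈ Finset.range n, B - e ≤ u (g^[i] t₀) := by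
      intro i hi
      have hi' : i ≤ n - 1 := by
        have := Finset.mem_range.mp hi; omega
      have := hblk i hi'
      rwa [hee] at this
    have hup : (B - e) ^ n ≤ ∏ i ∈ Finset.range n, u (g^[i] t₀) := by
      rcases le_or_gt 0 (B - e) with h0 | h0
      · calc (B - e) ^ n = ∏ _i ∈ Finset.range n, (B - e) := by
              rw [Finset.prod_const, Finset.card_range]
          _ ≤ ∏ i ∈ Finset.range n, u (g^[i] t₀) :=
              Finset.prod_le_prod (fun i _ => h0) hlow
      · have h2 : (B - e) ^ n < 0 := Odd.pow_neg hodd h0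
        have h3 : 0 < ∏ i ∈ Finset.range n, u (g^[i] t₀) :=
          Finset.prod_pos fun i _ => lt_trans one_pos (hu1 _ (hiter i t₀ ht₀))
        linarith
    have := hprodS t₀ ht₀
    have hu0B := huB t₀ ht₀
    nlinarith [hup, this, hu0B]
  have hψB : B ^ n ≤ (n : ℝ) * B + ((n : ℝ) - 1) := by
    have htend : Tendsto (fun k : ℕ => (B - 1 / ((k : ℝ) + 1)) ^ n) atTop (𝓝 (B ^ n)) := by
      have h1 : Tendsto (fun k : ℕ => B - 1 / ((k : ℝ) + 1)) atTop (𝓝 (B - 0)) :=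
        tendsto_const_nhds.sub tendsto_one_div_add_atTop_nhds_zero_nat
      rw [sub_zero] at h1
      exact h1.pow n
    exact le_of_tendsto htend (Filter.Eventually.of_forall fun k =>
      hBbound _ (by positivity))
  have hAbound : ∀ e : ℝ, 0 < e → (n : ℝ) * A + ((n : ℝ) - 1) ≤ (A + e) ^ n := by
    intro e he
    obtain ⟨t₀, ht₀, hblk⟩ := hblockA (e * D ^ (n - 1)) (by positivity)
    have hee : e * D ^ (n - 1) / D ^ (n - 1) = e := by
      field_simp
    have hhigh : ∀ i ∈ Finset.range n, u (g^[i] t₀) ≤ A + e := by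
      intro i hi
      have hi' : i ≤ n - 1 := by
        have := Finset.mem_range.mp hi; omega
      have := hblk i hi'
      rwa [hee] at this
    have hup : (∏ i ∈ Finset.range n, u (g^[i] t₀)) ≤ (A + e) ^ n := by
      calc (∏ i ∈ Finset.range n, u (g^[i] t₀)) ≤ ∏ _i ∈ Finset.range n, (A + e) :=
            Finset.prod_le_prod (fun i _ => (lt_trans one_pos (hu1 _ (hiter i t₀ ht₀))).le) hhigh
        _ = (A + e) ^ n := by rw [Finset.prod_const, Finset.card_range]
    have := hprodS t₀ ht₀
    have hu0A := huA t₀ ht₀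
    nlinarith [hup, this, hu0A]
  have hψA : (n : ℝ) * A + ((n : ℝ) - 1) ≤ A ^ n := by
    have htend : Tendsto (fun k : ℕ => (A + 1 / ((k : ℝ) + 1)) ^ n) atTop (𝓝 (A ^ n)) := by
      have h1 : Tendsto (fun k : ℕ => A + 1 / ((k : ℝ) + 1)) atTop (𝓝 (A + 0)) :=
        tendsto_const_nhds.add tendsto_one_div_add_atTop_nhds_zero_nat
      rw [add_zero] at h1
      exact h1.pow n
    exact ge_of_tendsto htend (Filter.Eventually.of_forall fun k =>
      hAbound _ (by positivity))
  have hBle : B ≤ c := (root_aux n hn c hc1 hroot B hB0).1 hψB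
  have hAge : c ≤ A := (root_aux n hn c hc1 hroot A (by linarith)).2 hψA
  intro t ht
  exact le_antisymm (le_trans (huB t ht) hBle) (le_trans hAge (huA t ht))

/-- A continuous solution `g : I → I` of `g^n(x) = n·g(x) − (n−1)·x` (`n ≥ 3`) satisfies
`g²(x) − 2g(x) + x = 0` if it is increasing; if it is decreasing, then `n` is odd and
`g` satisfies `g²(x) − (r₀+1)·g(x) + r₀·x = 0`, where `r₀` is the unique negative real
root of `r^n − n·r + n − 1`. -/
theorem boros_order_reduction
    (n : ℕ) (hn : 3 ≤ n)
    (I : Set ℝ) (hI : I.OrdConnected) (hne : ∃ a ∈ I, ∃ b ∈ I, a ≠ b)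
    (g : ℝ → ℝ) (hg : Set.MapsTo g I I) (hgc : ContinuousOn g I)
    (heq : ∀ x ∈ I, g^[n] x = (n : ℝ) * g x - ((n : ℝ) - 1) * x) :
    (StrictMonoOn g I → ∀ x ∈ I, g^[2] x - 2 * g x + x = 0) ∧
    (StrictAntiOn g I → Odd n ∧
      ∀ r₀ : ℝ, r₀ < 0 → r₀ ^ n - (n : ℝ) * r₀ + (n : ℝ) - 1 = 0 →
        ∀ x ∈ I, g^[2] x - (r₀ + 1) * g x + r₀ * x = 0) := by
  have hncast : (3 : ℝ) ≤ (n : ℝ) := by exact_mod_cast hn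
  have hit2 : ∀ y : ℝ, g^[2] y = g (g y) := fun y => by
    rw [show (2 : ℕ) = 1 + 1 from rfl, Function.iterate_succ_apply', Function.iterate_one]
  have hlinI : ∀ t ∈ I, g (g^[n] t) - g^[n] t
      = (n : ℝ) * (g (g t) - g t) - ((n : ℝ) - 1) * (g t - t) := by
    intro t ht
    have h1 := heq t ht
    have h2 := heq (g t) (hg ht)
    have e : g (g^[n] t) = g^[n] (g t) := by
      rw [← Function.iterate_succ_apply' g n t, Function.iterate_succ_apply]
    rw [e, h2, h1]; ring
  have hsumI : ∀ t ∈ I, ∑ j ∈ Finset.range (n - 1), (g (g^[j + 1] t) - g^[j + 1] t)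
      = ((n : ℝ) - 1) * (g t - t) := by
    intro t ht
    have tele := Finset.sum_range_sub (fun j => g^[j + 1] t) (n - 1)
    have hnn : n - 1 + 1 = n := by omega
    rw [hnn] at tele
    calc ∑ j ∈ Finset.range (n - 1), (g (g^[j + 1] t) - g^[j + 1] t)
        = ∑ j ∈ Finset.range (n - 1), (g^[j + 1 + 1] t - g^[j + 1] t) :=
          Finset.sum_congr rfl fun j _ => by
            rw [Function.iterate_succ_apply' g (j + 1) t]
      _ = g^[n] t - g^[0 + 1] t := tele
      _ = ((n : ℝ) - 1) * (g t - t) := by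
          simp only [Nat.zero_add, Function.iterate_one]
          rw [heq t ht]; ring
  constructor
  · -- increasing case
    intro hmono x hx
    rcases lt_trichotomy (g x) x with hlt | heqx | hgt
    · -- g x < x
      set S : Set ℝ := {t | t ∈ I ∧ t ≤ x ∧ ∀ s ∈ I, t ≤ s → s ≤ x → g s ≠ s} with hSdef
      have hxS : x ∈ S := by
        refine ⟨hx, le_rfl, fun s hsI h1 h2 => ?_⟩
        have hsx : s = x := le_antisymm h2 h1
        rw [hsx]
        exact ne_of_lt hlt
      have hmapsS : Set.MapsTo g S S := by
        rintro t ⟨htI, htx, hzf⟩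
        refine ⟨hg htI, ?_, ?_⟩
        · rcases eq_or_lt_of_le htx with h | h
          · rw [h]; linarith
          · linarith [hmono htI hx h]
        · rintro s hsI h1 h2 hfx
          rcases le_or_gt t s with h3 | h3
          · exact hzf s hsI h3 h2 hfx
          · have h4 : g s < g t := hmono hsI htI h3
            rw [hfx] at h4
            linarith
      have hneg : ∀ t ∈ S, g t - t < 0 := by
        rintro t ⟨htI, htx, hzf⟩
        rcases lt_trichotomy (g t) t with h1 | h1 | h1
        · linarith
        · exact absurd h1 (hzf t htI le_rfl htx)
        · have hsub : Icc t x ⊆ I := hI.out htI hx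
          have hcont : ContinuousOn (fun s => g s - s) (Icc t x) :=
            (hgc.mono hsub).sub continuousOn_id
          obtain ⟨s, hs, hs0⟩ := intermediate_value_Icc' htx hcont
            (show (0 : ℝ) ∈ Icc (g x - x) (g t - t) from ⟨by linarith, by linarith⟩)
          exact absurd (show g s = s by
            have : g s - s = 0 := hs0
            linarith) (hzf s (hsub hs) hs.1 hs.2)
      have hres := core_inc n hn g S ⟨x, hxS⟩ hmapsS (Or.inr hneg)
        (fun t ht => hlinI t ht.1) (fun t ht => hsumI t ht.1) x hxS
      rw [hit2 x]
      linarith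
    · -- g x = x
      rw [hit2 x, heqx, heqx]
      ring
    · -- x < g x
      set S : Set ℝ := {t | t ∈ I ∧ x ≤ t ∧ ∀ s ∈ I, x ≤ s → s ≤ t → g s ≠ s} with hSdef
      have hxS : x ∈ S := by
        refine ⟨hx, le_rfl, fun s hsI h1 h2 => ?_⟩
        have hsx : s = x := le_antisymm h2 h1
        rw [hsx]
        exact ne_of_gt hgt
      have hmapsS : Set.MapsTo g S S := by
        rintro t ⟨htI, hxt, hzf⟩
        refine ⟨hg htI, ?_, ?_⟩
        · rcases eq_or_lt_of_le hxt with h | h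
          · rw [← h]; linarith
          · linarith [hmono hx htI h]
        · rintro s hsI h1 h2 hfx
          rcases le_or_gt s t with h3 | h3
          · exact hzf s hsI h1 h3 hfx
          · have h4 : g t < g s := hmono htI hsI h3
            rw [hfx] at h4
            linarith
      have hpos : ∀ t ∈ S, 0 < g t - t := by
        rintro t ⟨htI, hxt, hzf⟩
        rcases lt_trichotomy (g t) t with h1 | h1 | h1
        · have hsub : Icc x t ⊆ I := hI.out hx htI
          have hcont : ContinuousOn (fun s => g s - s) (Icc x t) :=
            (hgc.mono hsub).sub continuousOn_id
          obtain ⟨s, hs, hs0⟩ := intermediate_value_Icc' hxt hcont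
            (show (0 : ℝ) ∈ Icc (g t - t) (g x - x) from ⟨by linarith, by linarith⟩)
          exact absurd (show g s = s by
            have : g s - s = 0 := hs0
            linarith) (hzf s (hsub hs) hs.1 hs.2)
        · exact absurd h1 (hzf t htI hxt le_rfl)
        · linarith
      have hres := core_inc n hn g S ⟨x, hxS⟩ hmapsS (Or.inl hpos)
        (fun t ht => hlinI t ht.1) (fun t ht => hsumI t ht.1) x hxS
      rw [hit2 x]
      linarith
  · -- decreasing case
    intro hanti
    have hodd : Odd n := by
      rw [← Nat.not_even_iff_odd]
      intro heven
      obtain ⟨k, hk⟩ := heven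
      have hiter2 : ∀ j : ℕ, (∀ s ∈ I, g^[j + j] s ∈ I) ∧
          (∀ s ∈ I, ∀ t ∈ I, s < t → g^[j + j] s < g^[j + j] t) := by
        intro j
        induction j with
        | zero =>
          constructor
          · intro s hs; simpa using hs
          · intro s _ t _ h; simpa using h
        | succ j ih =>
          have harith : (j + 1) + (j + 1) = 2 + (j + j) := by omega
          constructor
          · intro s hs
            rw [harith, Function.iterate_add_apply, hit2]
            exact hg (hg (ih.1 s hs))
          · intro s hs t ht hst
            rw [harith, Function.iterate_add_apply g 2 (j + j) s,
              Function.iterate_add_apply g 2 (j + j) t]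
            have h1 := ih.2 s hs t ht hst
            have h2 : g (g^[j + j] t) < g (g^[j + j] s) :=
              hanti (ih.1 s hs) (ih.1 t ht) h1
            have h3 : g (g (g^[j + j] s)) < g (g (g^[j + j] t)) :=
              hanti (hg (ih.1 t ht)) (hg (ih.1 s hs)) h2
            simp only [hit2]
            exact h3
      have key : ∀ a b : ℝ, a ∈ I → b ∈ I → a < b → False := by
        intro a b haI hbI hlt
        have h1 : g^[n] a < g^[n] b := by
          rw [hk]; exact (hiter2 k).2 a haI b hbI hlt
        rw [heq a haI, heq b hbI] at h1
        have h2 : g b < g a := hanti haI hbI hlt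
        have h3 : (0 : ℝ) < (n : ℝ) := by linarith
        have h4 : (0 : ℝ) < (n : ℝ) - 1 := by linarith
        nlinarith [mul_lt_mul_of_pos_left h2 h3, mul_lt_mul_of_pos_left hlt h4]
      obtain ⟨a, haI, b, hbI, hab⟩ := hne
      rcases lt_or_gt_of_ne hab with h | h
      · exact key a b haI hbI h
      · exact key b a hbI haI h
    refine ⟨hodd, ?_⟩
    intro r₀ hr₀neg hr₀root x hx
    set c : ℝ := -r₀ with hc
    have hc0 : 0 < c := by rw [hc]; linarith
    have hcroot : c ^ n = (n : ℝ) * c + ((n : ℝ) - 1) := by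
      have hre : r₀ = -c := by rw [hc]; ring
      rw [hre, Odd.neg_pow hodd] at hr₀root
      linarith
    have hc1 : 1 < c := by
      by_contra hcon
      push_neg at hcon
      have h1 : c ^ n ≤ 1 := pow_le_one₀ hc0.le hcon
      nlinarith
    -- fixed point
    have hone : ∃ t ∈ I, g t ≠ t := by
      obtain ⟨a, haI, b, hbI, hab⟩ := hne
      by_contra hcon
      push_neg at hcon
      rcases lt_or_gt_of_ne hab with h | h
      · have := hanti haI hbI h
        rw [hcon a haI, hcon b hbI] at this
        linarith
      · have := hanti hbI haI h
        rw [hcon a haI, hcon b hbI] at this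
        linarith
    have hconth : ContinuousOn (fun s => g s - s) I := hgc.sub continuousOn_id
    have hpfix : ∃ p ∈ I, g p = p := by
      obtain ⟨t₁, ht₁I, ht₁⟩ := hone
      have hgI := hg ht₁I
      rcases lt_or_gt_of_ne ht₁ with h1 | h1
      · have h2 : g t₁ < g (g t₁) := hanti hgI ht₁I h1
        have hsub : Icc (g t₁) t₁ ⊆ I := hI.out hgI ht₁I
        obtain ⟨p, hp, hp0⟩ := intermediate_value_Icc' h1.le (hconth.mono hsub)
          (show (0 : ℝ) ∈ Icc (g t₁ - t₁) (g (g t₁) - g t₁) from ⟨by linarith, by linarith⟩)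
        refine ⟨p, hsub hp, ?_⟩
        have : g p - p = 0 := hp0
        linarith
      · have h2 : g (g t₁) < g t₁ := hanti ht₁I hgI h1
        have hsub : Icc t₁ (g t₁) ⊆ I := hI.out ht₁I hgI
        obtain ⟨p, hp, hp0⟩ := intermediate_value_Icc' h1.le (hconth.mono hsub)
          (show (0 : ℝ) ∈ Icc (g (g t₁) - g t₁) (g t₁ - t₁) from ⟨by linarith, by linarith⟩)
        refine ⟨p, hsub hp, ?_⟩
        have : g p - p = 0 := hp0
        linarith
    obtain ⟨p, hpI, hpfixeq⟩ := hpfix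
    have huniq : ∀ t ∈ I, g t = t → t = p := by
      intro t htI hfx
      by_contra hne'
      rcases lt_or_gt_of_ne hne' with h | h
      · have := hanti htI hpI h
        rw [hfx, hpfixeq] at this
        linarith
      · have := hanti hpI htI h
        rw [hfx, hpfixeq] at this
        linarith
    by_cases hxp : g x = x
    · rw [hit2 x, hxp, hxp]; ring
    · set S : Set ℝ := {t | t ∈ I ∧ g t ≠ t} with hSdef
      have hxS : x ∈ S := ⟨hx, hxp⟩
      have hSI : ∀ t ∈ S, t ∈ I := fun t ht => ht.1
      have hSp : ∀ t ∈ S, t ≠ p := fun t ht hteq => ht.2 (by rw [hteq]; exact hpfixeq)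
      have hmapsS : Set.MapsTo g S S := by
        rintro t ⟨htI, hne'⟩
        refine ⟨hg htI, fun hfx => ?_⟩
        have h1 : g t = p := huniq _ (hg htI) hfx
        have h2 : t = p := hanti.injOn htI hpI (by rw [h1, hpfixeq])
        exact hne' (by rw [h2, hpfixeq])
      have hiterS : ∀ (k : ℕ), ∀ t ∈ S, g^[k] t ∈ S := fun k t ht => hmapsS.iterate k ht
      have hnzS : ∀ t ∈ S, g t - t ≠ 0 := fun t ht => sub_ne_zero.mpr ht.2
      obtain ⟨u, hu_eq⟩ : ∃ u : ℝ → ℝ, u = fun t => -((g (g t) - g t) / (g t - t)) :=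
        ⟨_, rfl⟩
      have hu_def : ∀ t ∈ S, g (g t) - g t = -(u t) * (g t - t) := by
        intro t ht
        simp only [hu_eq]
        rw [neg_neg, div_mul_cancel₀ _ (hnzS t ht)]
      have hsideL : ∀ t ∈ I, t < p → p < g t := fun t htI h => by
        have := hanti htI hpI h; rwa [hpfixeq] at this
      have hsideR : ∀ t ∈ I, p < t → g t < p := fun t htI h => by
        have := hanti hpI htI h; rwa [hpfixeq] at this
      have hlinS : ∀ t ∈ S, g (g^[n] t) - g^[n] t
          = (n : ℝ) * (g (g t) - g t) - ((n : ℝ) - 1) * (g t - t) :=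
        fun t ht => hlinI t (hSI t ht)
      have hprodS := prod_id_dec n hn hodd g u S hmapsS hnzS hu_def hlinS
      have hupos : ∀ t ∈ S, 0 < u t := by
        intro t ht
        obtain ⟨htI, hne'⟩ := ht
        have htp : t ≠ p := hSp t ⟨htI, hne'⟩
        rcases lt_or_gt_of_ne htp with h | h
        · have h1 : p < g t := hsideL t htI h
          have h2 : g (g t) < p := hsideR (g t) (hg htI) h1
          have hnum : g (g t) - g t < 0 := by linarith
          have hden : 0 < g t - t := by linarith
          simp only [hu_eq]
          have := div_neg_of_neg_of_pos hnum hden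
          linarith
        · have h1 : g t < p := hsideR t htI h
          have h2 : p < g (g t) := hsideL (g t) (hg htI) h1
          have hnum : 0 < g (g t) - g t := by linarith
          have hden : g t - t < 0 := by linarith
          simp only [hu_eq]
          have := div_neg_of_pos_of_neg hnum hden
          linarith
      have hne1 : ∀ t ∈ S, u t ≠ 1 := by
        intro t ht h1
        have hgg : g (g t) = t := by
          have := hu_def t ht
          rw [h1] at this
          linarith
        have hugt1 : u (g t) = 1 := by
          have h3 := hu_def (g t) (hmapsS ht)
          rw [hgg] at h3
          have h5 : (u (g t) - 1) * (g t - t) = 0 := by linear_combination -h3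
          rcases mul_eq_zero.mp h5 with h6 | h6
          · linarith
          · exact absurd h6 (hnzS t ht)
        have horbit : ∀ i : ℕ, g^[i] t = t ∨ g^[i] t = g t := by
          intro i
          induction i with
          | zero => left; simp
          | succ i ih =>
            rcases ih with h | h
            · right; rw [Function.iterate_succ_apply', h]
            · left; rw [Function.iterate_succ_apply', h, hgg]
        have hall1 : (∏ i ∈ Finset.range n, u (g^[i] t)) = 1 := by
          apply Finset.prod_eq_one
          intro i _
          rcases horbit i with h | h <;> rw [h]
          · exact h1
          · exact hugt1
        have hp1 := hprodS t ht
        rw [hall1] at hp1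
        have hupos_t := hupos t ht
        nlinarith [mul_pos (show (0:ℝ) < (n:ℝ) by linarith) hupos_t]
      have htrans : ∀ t ∈ S, u t < 1 → u (g t) < 1 := by
        intro t ht hlt
        have htI := hSI t ht
        have hd := hu_def t ht
        have htp : t ≠ p := hSp t ht
        have hgtS : g t ∈ S := hmapsS ht
        have hnz2 : g (g t) - g t ≠ 0 := hnzS (g t) hgtS
        have hredef : u (g t) - 1 = (g t - g (g (g t))) / (g (g t) - g t) := by
          simp only [hu_eq]
          field_simp
          ring
        rcases lt_or_gt_of_ne htp with h | h
        · have h1 : p < g t := hsideL t htI h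
          have hden : 0 < g t - t := by linarith
          have hggt : t < g (g t) := by
            nlinarith [hd, mul_pos (show (0:ℝ) < 1 - u t by linarith) hden]
          have h3 : g (g (g t)) < g t := hanti htI (hg (hg htI)) hggt
          have hden2 : g (g t) - g t < 0 := by
            have h2 : g (g t) < p := hsideR (g t) (hg htI) h1
            linarith
          have : u (g t) - 1 < 0 := by
            rw [hredef]
            exact div_neg_of_pos_of_neg (by linarith) (by linarith)
          linarith
        · have h1 : g t < p := hsideR t htI h
          have hden : g t - t < 0 := by linarith
          have hggt : g (g t) < t := by
            nlinarith [hd, mul_pos (show (0:ℝ) < 1 - u t by linarith)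
              (show (0:ℝ) < t - g t by linarith)]
          have h3 : g t < g (g (g t)) := hanti (hg (hg htI)) htI hggt
          have hden2 : 0 < g (g t) - g t := by
            have h2 : p < g (g t) := hsideL (g t) (hg htI) h1
            linarith
          have : u (g t) - 1 < 0 := by
            rw [hredef]
            exact div_neg_of_neg_of_pos (by linarith) (by linarith)
          linarith
      have hsame : ∀ s ∈ S, ∀ t ∈ S, (s < p ∧ t < p ∨ p < s ∧ p < t) → u s < 1 → u t < 1 := by
        intro s hs t ht hside hus
        by_contra hcon
        push_neg at hcon
        have hut : 1 < u t := lt_of_le_of_ne hcon (Ne.symm (hne1 t ht))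
        have hsubI : uIcc s t ⊆ I := hI.uIcc_subset (hSI s hs) (hSI t ht)
        have hmemS : ∀ y ∈ uIcc s t, y ∈ S := by
          intro y hy
          have hyI : y ∈ I := hsubI hy
          refine ⟨hyI, fun hfx => ?_⟩
          have hyp : y = p := huniq y hyI hfx
          rcases Set.mem_uIcc.mp hy with ⟨hy1, hy2⟩ | ⟨hy1, hy2⟩ <;>
            rcases hside with ⟨h1, h2⟩ | ⟨h1, h2⟩ <;> rw [hyp] at hy1 hy2 <;> linarith
        have hcont : ContinuousOn u (uIcc s t) := by
          have h1 : ContinuousOn (fun y => g (g y) - g y) I := (hgc.comp hgc hg).sub hgc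
          have h2 : ContinuousOn (fun y => g y - y) I := hgc.sub continuousOn_id
          rw [hu_eq]
          exact ((h1.mono hsubI).div (h2.mono hsubI)
            fun y hy => hnzS y (hmemS y hy)).neg
        have h1mem : (1 : ℝ) ∈ uIcc (u s) (u t) := Set.mem_uIcc.mpr (Or.inl ⟨hus.le, hut.le⟩)
        obtain ⟨ξ, hξ, hξ1⟩ := intermediate_value_uIcc hcont h1mem
        exact hne1 ξ (hmemS ξ hξ) hξ1
      have hu1 : ∀ t ∈ S, 1 < u t := by
        by_contra hcon
        push_neg at hcon
        obtain ⟨t₀, ht₀, hle⟩ := hcon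
        have hlt0 : u t₀ < 1 := lt_of_le_of_ne hle (hne1 t₀ ht₀)
        have hall : ∀ t ∈ S, u t < 1 := by
          intro t ht
          have ht0p : t₀ ≠ p := hSp t₀ ht₀
          have htp : t ≠ p := hSp t ht
          have hgt₀S : g t₀ ∈ S := hmapsS ht₀
          have hugt₀ : u (g t₀) < 1 := htrans t₀ ht₀ hlt0
          rcases lt_or_gt_of_ne ht0p with h1 | h1 <;> rcases lt_or_gt_of_ne htp with h2 | h2
          · exact hsame t₀ ht₀ t ht (Or.inl ⟨h1, h2⟩) hlt0
          · have h3 : p < g t₀ := hsideL t₀ (hSI t₀ ht₀) h1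
            exact hsame (g t₀) hgt₀S t ht (Or.inr ⟨h3, h2⟩) hugt₀
          · have h3 : g t₀ < p := hsideR t₀ (hSI t₀ ht₀) h1
            exact hsame (g t₀) hgt₀S t ht (Or.inl ⟨h3, h2⟩) hugt₀
          · exact hsame t₀ ht₀ t ht (Or.inr ⟨h1, h2⟩) hlt0
        have hple : (∏ i ∈ Finset.range n, u (g^[i] t₀)) ≤ 1 := by
          apply Finset.prod_le_one
          · intro i _; exact (hupos _ (hiterS i t₀ ht₀)).le
          · intro i _; exact (hall _ (hiterS i t₀ ht₀)).le
        have hp2 := hprodS t₀ ht₀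
        nlinarith [mul_pos (show (0:ℝ) < (n:ℝ) by linarith) (hupos t₀ ht₀)]
      have hspiralL : ∀ t ∈ S, t < p → g (g t) < t := by
        intro t ht h
        have htI := hSI t ht
        have h1 : p < g t := hsideL t htI h
        have hd := hu_def t ht
        have h2 := hu1 t ht
        nlinarith [mul_pos (show (0:ℝ) < u t - 1 by linarith)
          (show (0:ℝ) < g t - t by linarith)]
      have hspiralR : ∀ t ∈ S, p < t → t < g (g t) := by
        intro t ht h
        have htI := hSI t ht
        have h1 : g t < p := hsideR t htI h
        have hd := hu_def t ht
        have h2 := hu1 t ht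
        nlinarith [mul_pos (show (0:ℝ) < u t - 1 by linarith)
          (show (0:ℝ) < t - g t by linarith)]
      have hGcont : ContinuousOn (fun s => g (g s)) I := hgc.comp hgc hg
      have hsurjS : ∀ s ∈ S, ∃ t ∈ S, g t = s := by
        intro s hs
        have hsI := hSI s hs
        have hsp : s ≠ p := hSp s hs
        rcases lt_or_gt_of_ne hsp with h1 | h1
        · have hsub : Icc s p ⊆ I := hI.out hsI hpI
          have hGs : g (g s) < s := hspiralL s hs h1
          obtain ⟨ξ, hξ, hξeq⟩ := intermediate_value_Icc h1.le (hGcont.mono hsub)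
            (show s ∈ Icc (g (g s)) (g (g p)) from
              ⟨hGs.le, by rw [hpfixeq, hpfixeq]; exact h1.le⟩)
          have hξI : ξ ∈ I := hsub hξ
          have hξeq' : g (g ξ) = s := hξeq
          refine ⟨g ξ, ⟨hg hξI, fun hfx => ?_⟩, hξeq'⟩
          have h2 : g ξ = p := huniq _ (hg hξI) hfx
          exact hsp (by rw [← hξeq', hfx, h2])
        · have hsub : Icc p s ⊆ I := hI.out hpI hsI
          have hGs : s < g (g s) := hspiralR s hs h1
          obtain ⟨ξ, hξ, hξeq⟩ := intermediate_value_Icc h1.le (hGcont.mono hsub)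
            (show s ∈ Icc (g (g p)) (g (g s)) from
              ⟨by rw [hpfixeq, hpfixeq]; exact h1.le, hGs.le⟩)
          have hξI : ξ ∈ I := hsub hξ
          have hξeq' : g (g ξ) = s := hξeq
          refine ⟨g ξ, ⟨hg hξI, fun hfx => ?_⟩, hξeq'⟩
          have h2 : g ξ = p := huniq _ (hg hξI) hfx
          exact hsp (by rw [← hξeq', hfx, h2])
      have hfinal := core_dec n hn hodd g u S ⟨x, hxS⟩ hmapsS hsurjS hnzS hu_def hu1
        hlinS c hc1 hcroot x hxS
      have hd := hu_def x hxS
      rw [hfinal, hc] at hd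
      rw [hit2 x]
      linear_combination hd
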